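/- For Ψ₁, Ψ₂ ∈ Sp(2n), X₁, X₂ ∈ Mat_{2n,m}(R), and symmetric E₁, E₂ ∈ Mat_m(R), the product M(Ψ₁,X₁,E₁)·M(Ψ₂,X₂,E₂) equals M(Ψ₁Ψ₂, X₂ + Ψ₂⁻¹X₁, E₁ + E₂ + Sym(X₁ᵀ J₀ Ψ₂ X₂)), where Sym(P) = (P + Pᵀ)/2. -/

import Mathlib

open Matrix

abbrev V (n : ℕ) := Fin n ⊕ Fin n

/-- The standard complex structure `J₀ = [[0,-I],[I,0]]` on `ℝ^{2n}`. -/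
noncomputable def J0 (n : ℕ) : Matrix (V n) (V n) ℝ :=
  Matrix.fromBlocks 0 (-1) 1 0

/-- `Ψ` is symplectic: `Ψᵀ J₀ Ψ = J₀`. -/
def IsSymplectic {n : ℕ} (Ψ : Matrix (V n) (V n) ℝ) : Prop :=
  Ψᵀ * J0 n * Ψ = J0 n

/-- The block matrix `M(Ψ,X,E) = [[Ψ, ΨX, 0],[0, I, 0],[XᵀJ₀, E + ½XᵀJ₀X, I]]`. -/
noncomputable def Mblk {n m : ℕ} (Ψ : Matrix (V n) (V n) ℝ) (X : Matrix (V n) (Fin m) ℝ)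
    (E : Matrix (Fin m) (Fin m) ℝ) : Matrix (V n ⊕ V m) (V n ⊕ V m) ℝ :=
  Matrix.fromBlocks Ψ (Matrix.fromCols (Ψ * X) 0)
    (Matrix.fromRows 0 (Xᵀ * J0 n))
    (Matrix.fromBlocks 1 0 (E + (1 / 2 : ℝ) • (Xᵀ * J0 n * X)) 1)

/-- The symmetric part `symPart(P) = (P + Pᵀ)/2` of a square matrix. -/
noncomputable def symPart {m : ℕ} (P : Matrix (Fin m) (Fin m) ℝ) : Matrix (Fin m) (Fin m) ℝ :=
  (1 / 2 : ℝ) • (P + Pᵀ)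

lemma myFromColumns_add {R : Type*} [AddCommMonoid R] {m n₁ n₂ : Type*}
    (A C : Matrix m n₁ R) (B D : Matrix m n₂ R) :
    fromCols A B + fromCols C D = fromCols (A + C) (B + D) := by
  ext _ (_ | _) <;> simp

lemma myFromRows_add {R : Type*} [AddCommMonoid R] {m₁ m₂ n : Type*}
    (A C : Matrix m₁ n R) (B D : Matrix m₂ n R) :
    fromRows A B + fromRows C D = fromRows (A + C) (B + D) := by
  ext (_ | _) _ <;> simp

lemma J0_mul_J0 (n : ℕ) : J0 n * J0 n = -1 := by
  have h : (-1 : Matrix (V n) (V n) ℝ) = Matrix.fromBlocks (-1) 0 0 (-1) := by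
    ext (i | i) (j | j) <;>
      simp [Matrix.fromBlocks, Matrix.one_apply, apply_ite]
  rw [J0, Matrix.fromBlocks_multiply, h]
  simp

lemma J0_transpose (n : ℕ) : (J0 n)ᵀ = -(J0 n) := by
  rw [J0, Matrix.fromBlocks_transpose]
  ext (i | i) (j | j) <;> simp [Matrix.fromBlocks]

lemma symplectic_left_inv {n : ℕ} {Ψ : Matrix (V n) (V n) ℝ} (h : IsSymplectic Ψ) :
    (-(J0 n * Ψᵀ * J0 n)) * Ψ = 1 := by
  have h' : Ψᵀ * J0 n * Ψ = J0 n := h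
  calc (-(J0 n * Ψᵀ * J0 n)) * Ψ = -(J0 n * (Ψᵀ * J0 n * Ψ)) := by
        simp [Matrix.mul_assoc]
    _ = -(J0 n * J0 n) := by rw [h']
    _ = 1 := by rw [J0_mul_J0]; simp

lemma symplectic_inv_eq {n : ℕ} {Ψ : Matrix (V n) (V n) ℝ} (h : IsSymplectic Ψ) :
    Ψ⁻¹ = -(J0 n * Ψᵀ * J0 n) :=
  Matrix.inv_eq_left_inv (symplectic_left_inv h)

lemma symplectic_mul_inv {n : ℕ} {Ψ : Matrix (V n) (V n) ℝ} (h : IsSymplectic Ψ) :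
    Ψ * Ψ⁻¹ = 1 := by
  rw [symplectic_inv_eq h]
  exact mul_eq_one_comm.mp (symplectic_left_inv h)

lemma symplectic_invT_mul_J {n : ℕ} {Ψ : Matrix (V n) (V n) ℝ} (h : IsSymplectic Ψ) :
    (Ψ⁻¹)ᵀ * J0 n = J0 n * Ψ := by
  rw [symplectic_inv_eq h]
  simp only [Matrix.transpose_neg, Matrix.transpose_mul, J0_transpose,
    Matrix.transpose_transpose, Matrix.neg_mul, Matrix.mul_neg, neg_neg]
  rw [Matrix.mul_assoc, Matrix.mul_assoc, J0_mul_J0]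
  simp

lemma symplectic_J_mul_inv {n : ℕ} {Ψ : Matrix (V n) (V n) ℝ} (h : IsSymplectic Ψ) :
    J0 n * Ψ⁻¹ = Ψᵀ * J0 n := by
  have h1 := congrArg Matrix.transpose (symplectic_invT_mul_J h)
  simp only [Matrix.transpose_mul, Matrix.transpose_transpose, J0_transpose,
    Matrix.neg_mul, Matrix.mul_neg] at h1
  exact neg_injective h1

/-- Product formula:
`M(Ψ₁,X₁,E₁)·M(Ψ₂,X₂,E₂) = M(Ψ₁Ψ₂, X₂ + Ψ₂⁻¹X₁, E₁ + E₂ + Sym(X₁ᵀJ₀Ψ₂X₂))`. -/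
theorem stmt1 {n m : ℕ} (Ψ₁ Ψ₂ : Matrix (V n) (V n) ℝ)
    (X₁ X₂ : Matrix (V n) (Fin m) ℝ) (E₁ E₂ : Matrix (Fin m) (Fin m) ℝ)
    (hΨ₁ : IsSymplectic Ψ₁) (hΨ₂ : IsSymplectic Ψ₂)
    (hE₁ : E₁ᵀ = E₁) (hE₂ : E₂ᵀ = E₂) :
    Mblk Ψ₁ X₁ E₁ * Mblk Ψ₂ X₂ E₂ =
      Mblk (Ψ₁ * Ψ₂) (X₂ + Ψ₂⁻¹ * X₁) (E₁ + E₂ + symPart (X₁ᵀ * J0 n * Ψ₂ * X₂)) := by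
  have hmul : Ψ₂ * Ψ₂⁻¹ = 1 := symplectic_mul_inv hΨ₂
  have hT : (Ψ₂⁻¹)ᵀ * J0 n = J0 n * Ψ₂ := symplectic_invT_mul_J hΨ₂
  have hJi : J0 n * Ψ₂⁻¹ = Ψ₂ᵀ * J0 n := symplectic_J_mul_inv hΨ₂
  have f1 : (Ψ₂⁻¹)ᵀ * (J0 n * X₂) = J0 n * (Ψ₂ * X₂) := by
    rw [← Matrix.mul_assoc, hT, Matrix.mul_assoc]
  have f2 : J0 n * (Ψ₂⁻¹ * X₁) = Ψ₂ᵀ * (J0 n * X₁) := by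
    rw [← Matrix.mul_assoc, hJi, Matrix.mul_assoc]
  have f4 : (Ψ₂⁻¹)ᵀ * (Ψ₂ᵀ * (J0 n * X₁)) = J0 n * X₁ := by
    rw [← Matrix.mul_assoc, ← Matrix.transpose_mul, hmul, Matrix.transpose_one,
      Matrix.one_mul]
  unfold Mblk symPart
  rw [Matrix.fromBlocks_multiply, Matrix.fromBlocks_inj]
  refine ⟨?_, ?_, ?_, ?_⟩
  · rw [Matrix.fromCols_mul_fromRows]
    simp
  · rw [Matrix.mul_fromCols, Matrix.fromCols_mul_fromBlocks, myFromColumns_add]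
    have key : Ψ₁ * Ψ₂ * (X₂ + Ψ₂⁻¹ * X₁) = Ψ₁ * (Ψ₂ * X₂) + Ψ₁ * X₁ := by
      rw [Matrix.mul_add, Matrix.mul_assoc Ψ₁ Ψ₂ (Ψ₂⁻¹ * X₁), ← Matrix.mul_assoc Ψ₂ Ψ₂⁻¹ X₁,
        hmul, Matrix.one_mul, Matrix.mul_assoc]
    simp [key]
  · rw [Matrix.fromRows_mul, Matrix.fromBlocks_mul_fromRows, myFromRows_add]
    have key : (X₂ + Ψ₂⁻¹ * X₁)ᵀ * J0 n = X₂ᵀ * J0 n + X₁ᵀ * (J0 n * Ψ₂) := by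
      rw [Matrix.transpose_add, Matrix.transpose_mul, Matrix.add_mul,
        Matrix.mul_assoc X₁ᵀ (Ψ₂⁻¹)ᵀ (J0 n), hT]
    rw [key]
    simp [Matrix.mul_assoc, add_comm]
  · rw [Matrix.fromRows_mul_fromCols, Matrix.fromBlocks_multiply, Matrix.fromBlocks_add,
      Matrix.fromBlocks_inj]
    refine ⟨by simp, by simp, ?_, by simp⟩
    simp only [Matrix.transpose_add, Matrix.transpose_mul, Matrix.transpose_transpose,
      J0_transpose, Matrix.add_mul, Matrix.mul_add, Matrix.mul_assoc, Matrix.neg_mul,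
      Matrix.mul_neg, f1, f2, f4, smul_add, smul_neg, Matrix.mul_zero, Matrix.zero_mul,
      Matrix.mul_one, Matrix.one_mul, add_zero, zero_add]
    ext i j
    simp only [Matrix.add_apply, Matrix.smul_apply, Matrix.sub_apply, Matrix.neg_apply,
      smul_eq_mul]
    ring
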